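/- For all integers F ≥ 1 and M ≥ F + 1, there exists a matrix G ∈ ℝ^{M×F} such that GᵀG = M·I_F, Gᵀ1_M = 0_F (where 1_M is the all-ones vector in ℝ^M), and G has at most F + 1 nonzero rows. -/

import Mathlib

open Matrix

private lemma sum_pad {M n : ℕ} (h : n ≤ M) (g : Fin n → ℝ) :
    ∑ m : Fin M, (if hm : (m : ℕ) < n then g ⟨m, hm⟩ else 0) = ∑ i : Fin n, g i := by
  rw [Fin.sum_univ_eq_sum_range (fun i => if hm : i < n then g ⟨i, hm⟩ else 0)]
  have hr : ∑ i : Fin n, g i = ∑ i : Fin n, (if hm : (i : ℕ) < n then g ⟨i, hm⟩ else 0) := by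
    refine Finset.sum_congr rfl fun i _ => ?_
    rw [dif_pos i.isLt]
  rw [hr, Fin.sum_univ_eq_sum_range (fun i => if hm : i < n then g ⟨i, hm⟩ else 0)]
  symm
  apply Finset.sum_subset (Finset.range_subset_range.mpr h)
  intro x _ hx
  rw [Finset.mem_range] at hx
  simp [hx]

private noncomputable def ones (F : ℕ) : EuclideanSpace ℝ (Fin (F + 1)) := WithLp.toLp 2 (fun _ => 1)

private lemma exists_u (F : ℕ) :
    ∃ u : Fin F → EuclideanSpace ℝ (Fin (F + 1)),
      (∀ j k, ∑ i, u j i * u k i = if j = k then (1 : ℝ) else 0) ∧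
      (∀ j, ∑ i, u j i = 0) := by
  haveI : Fact (Module.finrank ℝ (EuclideanSpace ℝ (Fin (F + 1))) = F + 1) :=
    ⟨by simp⟩
  have hv0 : ones F ≠ 0 := by
    intro h
    have h0 := congrArg (fun v : EuclideanSpace ℝ (Fin (F + 1)) => v ⟨0, by omega⟩) h
    simp [ones] at h0
  have hWrank : Module.finrank ℝ ((ℝ ∙ ones F)ᗮ) = F := by
    have := Submodule.finrank_orthogonal_span_singleton (𝕜 := ℝ)
      (E := EuclideanSpace ℝ (Fin (F + 1))) (n := F) hv0
    simpa using this
  let b := (stdOrthonormalBasis ℝ ((ℝ ∙ ones F)ᗮ)).reindex (finCongr hWrank)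
  refine ⟨fun j => (b j : EuclideanSpace ℝ (Fin (F + 1))), ?_, ?_⟩
  · intro j k
    have h := (orthonormal_iff_ite (𝕜 := ℝ)).mp b.orthonormal j k
    rw [Submodule.coe_inner, PiLp.inner_apply] at h
    simpa [mul_comm] using h
  · intro j
    have h : (inner (𝕜 := ℝ) (ones F)
        ((b j : EuclideanSpace ℝ (Fin (F + 1))))) = 0 :=
      (Submodule.mem_orthogonal_singleton_iff_inner_right).mp (b j).2
    rw [PiLp.inner_apply] at h
    simpa [ones] using h

/-- the finite-sample MAX-VAR DGCCA constraints admit trivial solutions: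
there is `G ∈ ℝ^{M×F}` with `GᵀG = M·I`, `Gᵀ1 = 0`, and at most `F + 1` nonzero
rows. -/
theorem stmt7 (F M : ℕ) (hF : 1 ≤ F) (hM : F + 1 ≤ M) :
    ∃ G : Matrix (Fin M) (Fin F) ℝ,
      Gᵀ * G = (M : ℝ) • (1 : Matrix (Fin F) (Fin F) ℝ) ∧
      Gᵀ.mulVec (fun _ => (1 : ℝ)) = 0 ∧
      ∃ S : Finset (Fin M), S.card ≤ F + 1 ∧ ∀ m ∉ S, ∀ j, G m j = 0 := by
  obtain ⟨u, hu1, hu2⟩ := exists_u F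
  have hMnn : (0 : ℝ) ≤ (M : ℝ) := by positivity
  have hsq : Real.sqrt M * Real.sqrt M = (M : ℝ) := Real.mul_self_sqrt hMnn
  set G : Matrix (Fin M) (Fin F) ℝ := fun m j =>
    if hm : (m : ℕ) < F + 1 then Real.sqrt M * u j ⟨m, hm⟩ else 0 with hG
  refine ⟨G, ?_, ?_, ?_⟩
  · ext j k
    have hsum : ∀ m : Fin M, G m j * G m k =
        (if hm : (m : ℕ) < F + 1 then
          (fun i : Fin (F + 1) => (M : ℝ) * (u j i * u k i)) ⟨m, hm⟩ else 0) := by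
      intro m
      by_cases hm : (m : ℕ) < F + 1
      · simp only [hG, hm, dif_pos]
        rw [mul_mul_mul_comm, hsq]
      · simp only [Nat.lt_add_one_iff] at hm
        simp [hG, hm]
    have hmm : (Gᵀ * G) j k = ∑ m : Fin M, G m j * G m k := by
      simp [Matrix.mul_apply, Matrix.transpose_apply]
    rw [hmm, Finset.sum_congr rfl (fun m _ => hsum m),
      sum_pad hM (fun i : Fin (F + 1) => (M : ℝ) * (u j i * u k i)),
      ← Finset.mul_sum, hu1 j k]
    by_cases hjk : j = k <;> simp [hjk, Matrix.one_apply, Matrix.smul_apply]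
  · funext j
    simp only [Pi.zero_apply]
    have hmm : Gᵀ.mulVec (fun _ => (1 : ℝ)) j = ∑ m : Fin M, G m j := by
      simp [Matrix.mulVec, dotProduct, Matrix.transpose_apply]
    have hsum : ∀ m : Fin M, G m j =
        (if hm : (m : ℕ) < F + 1 then
          (fun i : Fin (F + 1) => Real.sqrt M * u j i) ⟨m, hm⟩ else 0) := by
      intro m
      by_cases hm : (m : ℕ) < F + 1 <;> simp only [Nat.lt_add_one_iff] at hm <;> simp [hG, hm]
    rw [hmm, Finset.sum_congr rfl (fun m _ => hsum m),
      sum_pad hM (fun i : Fin (F + 1) => Real.sqrt M * u j i),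
      ← Finset.mul_sum, hu2 j, mul_zero]
  · refine ⟨Finset.univ.filter (fun m : Fin M => (m : ℕ) < F + 1), ?_, ?_⟩
    · calc (Finset.univ.filter (fun m : Fin M => (m : ℕ) < F + 1)).card
          ≤ (Finset.image (Fin.castLE hM) Finset.univ).card := by
            apply Finset.card_le_card
            intro m hm
            simp only [Finset.mem_filter, Finset.mem_univ, true_and] at hm
            simp only [Finset.mem_image, Finset.mem_univ, true_and]
            exact ⟨⟨m, hm⟩, rfl⟩
        _ ≤ (Finset.univ : Finset (Fin (F + 1))).card := Finset.card_image_le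
        _ = F + 1 := by simp
    · intro m hm j
      simp only [Finset.mem_filter, Finset.mem_univ, true_and, not_lt] at hm
      simp [hG, Nat.not_lt.mpr hm, show ¬ (m : ℕ) ≤ F by omega]
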